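/- Let X₁,…,X_N be i.i.d. Exp(λ) random variables and let i* be the index of the minimum. Then the expected number of indices j ≠ i* with X_j < X_{i*} + l equals (N−1)(1 − e^{−λl}). -/

import Mathlib

open MeasureTheory
open scoped Classical

open ProbabilityTheory Real Set

namespace Aux

lemma expMeasure_apply (r : ℝ) {s : Set ℝ} (hs : MeasurableSet s) :
    expMeasure r s = ∫⁻ x in s, exponentialPDF r x := by
  rw [expMeasure, gammaMeasure, withDensity_apply _ hs]; rfl

lemma expMeasure_eq (r : ℝ) :
    expMeasure r = MeasureTheory.volume.withDensity (exponentialPDF r) := rfl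

lemma expMeasure_Iic {r : ℝ} (hr : 0 < r) (x : ℝ) :
    expMeasure r (Iic x)
      = ENNReal.ofReal (if 0 ≤ x then 1 - Real.exp (-(r*x)) else 0) := by
  rw [expMeasure_apply r measurableSet_Iic, lintegral_exponentialPDF_eq_antiDeriv hr]

lemma expMeasure_Ioi_neg {r : ℝ} (hr : 0 < r) {t : ℝ} (ht : t < 0) :
    expMeasure r (Ioi t) = 1 := by
  have := isProbabilityMeasure_expMeasure hr
  have h : expMeasure r (Ioi t) = 1 - expMeasure r (Iic t) := by
    rw [← Set.compl_Iic, measure_compl measurableSet_Iic (measure_ne_top _ _), measure_univ]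
  rw [h, expMeasure_Iic hr, if_neg (by linarith)]
  simp

lemma expMeasure_Ioi {r : ℝ} (hr : 0 < r) {t : ℝ} (ht : 0 ≤ t) :
    expMeasure r (Ioi t) = ENNReal.ofReal (Real.exp (-(r*t))) := by
  have := isProbabilityMeasure_expMeasure hr
  have h : expMeasure r (Ioi t) = 1 - expMeasure r (Iic t) := by
    rw [← Set.compl_Iic, measure_compl measurableSet_Iic (measure_ne_top _ _), measure_univ]
  rw [h, expMeasure_Iic hr, if_pos ht]
  have h1 : Real.exp (-(r*t)) ≤ 1 := by
    rw [Real.exp_le_one_iff]; nlinarith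
  rw [← ENNReal.ofReal_one, ← ENNReal.ofReal_sub _ (by linarith [Real.exp_pos (-(r*t))])]
  norm_num

lemma expMeasure_ae_nonneg {r : ℝ} : ∀ᵐ x ∂(expMeasure r), 0 ≤ x := by
  rw [ae_iff]
  have : {x : ℝ | ¬ 0 ≤ x} = Iio 0 := by ext x; simp
  rw [this, expMeasure_apply r measurableSet_Iio, lintegral_exponentialPDF_of_nonpos le_rfl]

lemma expMeasure_Ioo {r : ℝ} (hr : 0 < r) {a b : ℝ} (ha : 0 ≤ a) (hab : a ≤ b) :
    expMeasure r (Ioo a b)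
      = ENNReal.ofReal (Real.exp (-(r*a)) - Real.exp (-(r*b))) := by
  have := isProbabilityMeasure_expMeasure hr
  have hsing : expMeasure r {b} = 0 := by
    rw [expMeasure_apply r (measurableSet_singleton b)]
    rw [MeasureTheory.setLIntegral_measure_zero _ _ (measure_singleton b)]
  have hIoc : expMeasure r (Ioo a b) = expMeasure r (Ioc a b) := by
    rcases eq_or_lt_of_le hab with h | h
    · subst h; simp
    · rw [← Set.Ioo_union_right h]
      exact le_antisymm (measure_mono Set.subset_union_left)
        ((measure_union_le _ _).trans (by rw [hsing, add_zero]))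
  have hdiff : expMeasure r (Ioc a b) = expMeasure r (Ioi a) - expMeasure r (Ioi b) := by
    rw [← Set.Ioi_diff_Ioi,
      measure_diff (Set.Ioi_subset_Ioi hab) measurableSet_Ioi.nullMeasurableSet
        (measure_ne_top _ _)]
  rw [hIoc, hdiff, expMeasure_Ioi hr ha, expMeasure_Ioi hr (ha.trans hab),
    ENNReal.ofReal_sub _ (Real.exp_nonneg _)]


lemma measurable_inf' {ι δ : Type*} [MeasurableSpace δ] {s : Finset ι} (hs : s.Nonempty)
    {f : ι → δ → ℝ} (hf : ∀ n ∈ s, Measurable (f n)) :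
    Measurable (fun x => s.inf' hs (fun i => f i x)) := by
  have : (fun x => s.inf' hs (fun i => f i x)) = s.inf' hs f := by
    funext x; rw [Finset.inf'_apply]
  rw [this]
  exact Finset.inf'_induction hs _ (fun p hp q hq => hp.inf hq) fun n hn => hf n hn

lemma inf'_attach {ι : Type*} (s : Finset ι) (hs : s.Nonempty) (f : ι → ℝ) :
    (Finset.univ : Finset {x // x ∈ s}).inf' (by
      rcases hs with ⟨a, ha⟩; exact ⟨⟨a, ha⟩, Finset.mem_univ _⟩) (fun i => f i)
      = s.inf' hs f := by
  apply le_antisymm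
  · exact Finset.le_inf' _ _ fun b hb => Finset.inf'_le _ (Finset.mem_univ (⟨b, hb⟩ : {x // x ∈ s}))
  · exact Finset.le_inf' _ _ fun b _ => Finset.inf'_le _ b.2

lemma min_aux {a b l : ℝ} : (a ≠ a ⊓ b ∧ a < a ⊓ b + l) ↔ (b < a ∧ a < b + l) := by
  rcases le_or_gt a b with h | h
  · simp [inf_eq_left.2 h, not_lt.2 h]
  · simp [inf_eq_right.2 h.le, h.ne', h]

lemma lint_exp {r' r : ℝ} (hr' : 0 < r') (hr : 0 < r) :
    ∫⁻ m, ENNReal.ofReal (Real.exp (-(r*m))) ∂(expMeasure r')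
      = ENNReal.ofReal (r' / (r + r')) := by
  have hm : Measurable (exponentialPDF r') := (measurable_exponentialPDFReal r').ennreal_ofReal
  have hf : Measurable (fun m : ℝ => ENNReal.ofReal (Real.exp (-(r*m)))) :=
    Measurable.ennreal_ofReal (by fun_prop)
  rw [expMeasure_eq, lintegral_withDensity_eq_lintegral_mul _ hm hf]
  have key : (fun a => (exponentialPDF r' * fun m => ENNReal.ofReal (Real.exp (-(r*m)))) a)
      = fun a => ENNReal.ofReal (r' / (r + r')) * exponentialPDF (r + r') a := by
    funext a
    simp only [Pi.mul_apply]
    by_cases ha : 0 ≤ a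
    · rw [exponentialPDF_of_nonneg ha, exponentialPDF_of_nonneg ha,
        ← ENNReal.ofReal_mul (by positivity), ← ENNReal.ofReal_mul (by positivity)]
      congr 1
      rw [mul_assoc, ← Real.exp_add]
      have h1 : -(r' * a) + -(r * a) = -((r+r')*a) := by ring
      rw [h1]
      field_simp
    · rw [exponentialPDF_of_neg (lt_of_not_ge ha), exponentialPDF_of_neg (lt_of_not_ge ha),
        zero_mul, mul_zero]
  have hm2 : Measurable (exponentialPDF (r+r')) :=
    (measurable_exponentialPDFReal (r+r')).ennreal_ofReal
  rw [key, lintegral_const_mul _ hm2,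
    lintegral_exponentialPDF_eq_one (by positivity : (0:ℝ) < r + r'), mul_one]


lemma map_inf'_eq {Ω : Type*} [MeasurableSpace Ω] (μ : Measure Ω) [IsProbabilityMeasure μ]
    {N : ℕ} {r : ℝ} (hr : 0 < r) (X : Fin N → Ω → ℝ) (hmeas : ∀ i, Measurable (X i))
    (hindep : ProbabilityTheory.iIndepFun X μ)
    (hmap : ∀ i, Measure.map (X i) μ = expMeasure r)
    (T : Finset (Fin N)) (hT : T.Nonempty) :
    Measure.map (fun ω => T.inf' hT (fun i => X i ω)) μ
      = expMeasure ((T.card : ℝ) * r) := by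
  have hcardpos : 0 < (T.card : ℝ) := by exact_mod_cast Finset.card_pos.2 hT
  have hrate : 0 < (T.card : ℝ) * r := by positivity
  set f : Ω → ℝ := fun ω => T.inf' hT (fun i => X i ω) with hf
  have hfm : Measurable f := measurable_inf' hT (fun n _ => hmeas n)
  have hprob : IsProbabilityMeasure (Measure.map f μ) :=
    Measure.isProbabilityMeasure_map hfm.aemeasurable
  have hexp : IsProbabilityMeasure (expMeasure ((T.card : ℝ) * r)) :=
    isProbabilityMeasure_expMeasure hrate
  refine Measure.ext_of_Iic _ _ (fun t => ?_)
  rw [Measure.map_apply hfm measurableSet_Iic]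
  have hA : MeasurableSet (f ⁻¹' Iic t) := hfm measurableSet_Iic
  have hcompl : (f ⁻¹' Iic t)ᶜ = ⋂ i ∈ T, X i ⁻¹' Ioi t := by
    ext ω
    simp [hf, Finset.lt_inf'_iff, not_le]
  have hprod : μ ((f ⁻¹' Iic t)ᶜ) = (expMeasure r (Ioi t)) ^ T.card := by
    rw [hcompl, hindep.meas_biInter (fun i _ => ⟨Ioi t, measurableSet_Ioi, rfl⟩)]
    rw [Finset.prod_congr rfl (fun i _ => by
      rw [← Measure.map_apply (hmeas i) measurableSet_Ioi, hmap i]), Finset.prod_const]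
  have hA1 : μ (f ⁻¹' Iic t) = 1 - μ ((f ⁻¹' Iic t)ᶜ) := by
    rw [measure_compl hA (measure_ne_top _ _), measure_univ,
      ENNReal.sub_sub_cancel ENNReal.one_ne_top prob_le_one]
  rcases lt_or_ge t 0 with ht | ht
  · rw [hA1, hprod, expMeasure_Ioi_neg hr ht, one_pow, tsub_self,
      expMeasure_Iic hrate, if_neg (not_le.2 ht), ENNReal.ofReal_zero]
  · rw [hA1, hprod, expMeasure_Ioi hr ht, expMeasure_Iic hrate, if_pos ht,
      ← ENNReal.ofReal_pow (Real.exp_nonneg _), ← Real.exp_nat_mul]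
    have h2 : (T.card : ℝ) * -(r * t) = -((T.card : ℝ) * r * t) := by ring
    rw [h2, ← ENNReal.ofReal_one, ← ENNReal.ofReal_sub _ (Real.exp_nonneg _)]


lemma prob_window {Ω : Type*} [MeasurableSpace Ω] (μ : Measure Ω) [IsProbabilityMeasure μ]
    {r r' l : ℝ} (hr : 0 < r) (hr' : 0 < r') (hl : 0 < l)
    (f g : Ω → ℝ) (hfm : Measurable f) (hgm : Measurable g)
    (hind : ProbabilityTheory.IndepFun f g μ)
    (hfl : Measure.map f μ = expMeasure r) (hgl : Measure.map g μ = expMeasure r') :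
    μ {ω | g ω < f ω ∧ f ω < g ω + l}
      = ENNReal.ofReal (1 - Real.exp (-(r*l))) * ENNReal.ofReal (r' / (r + r')) := by
  haveI h1 : IsProbabilityMeasure (expMeasure r) := isProbabilityMeasure_expMeasure hr
  haveI h2 : IsProbabilityMeasure (expMeasure r') := isProbabilityMeasure_expMeasure hr'
  have hprodlaw : Measure.map (fun ω => (f ω, g ω)) μ
      = (expMeasure r).prod (expMeasure r') := by
    rw [← hfl, ← hgl]
    exact (ProbabilityTheory.indepFun_iff_map_prod_eq_prod_map_map
      hfm.aemeasurable hgm.aemeasurable).1 hind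
  set S : Set (ℝ × ℝ) := {p | p.2 < p.1 ∧ p.1 < p.2 + l} with hSdef
  have hS : MeasurableSet S :=
    (measurableSet_lt measurable_snd measurable_fst).inter
      (measurableSet_lt measurable_fst (measurable_snd.add_const l))
  have key : μ {ω | g ω < f ω ∧ f ω < g ω + l} = (expMeasure r).prod (expMeasure r') S := by
    rw [← hprodlaw, Measure.map_apply (hfm.prodMk hgm) hS]
    rfl
  rw [key, Measure.prod_apply_symm hS]
  have hae : (fun m => expMeasure r ((fun x => (x, m)) ⁻¹' S))
      =ᵐ[expMeasure r'] (fun m => ENNReal.ofReal (1 - Real.exp (-(r*l)))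
            * ENNReal.ofReal (Real.exp (-(r*m)))) := by
    filter_upwards [expMeasure_ae_nonneg (r := r')] with m hm
    have hpre : (fun x => (x, m)) ⁻¹' S = Ioo m (m + l) := by
      ext x; simp [hSdef, Set.mem_Ioo]
    rw [hpre, expMeasure_Ioo hr hm (by linarith)]
    have hsplit : Real.exp (-(r*m)) - Real.exp (-(r*(m+l)))
        = (1 - Real.exp (-(r*l))) * Real.exp (-(r*m)) := by
      have : -(r*(m+l)) = -(r*m) + -(r*l) := by ring
      rw [this, Real.exp_add]; ring
    have hnn : 0 ≤ 1 - Real.exp (-(r*l)) := by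
      have : Real.exp (-(r*l)) ≤ 1 := by rw [Real.exp_le_one_iff]; nlinarith
      linarith
    rw [hsplit, ENNReal.ofReal_mul hnn]
  rw [lintegral_congr_ae hae, lintegral_const_mul _
    (Measurable.ennreal_ofReal (by fun_prop)), lint_exp hr' hr]

end Aux


theorem stmt_4 {Ω : Type*} [MeasurableSpace Ω] (μ : Measure Ω) [IsProbabilityMeasure μ]
    (N : ℕ) (hN : 2 ≤ N) (r l : ℝ) (hr : 0 < r) (hl : 0 < l)
    (X : Fin N → Ω → ℝ) (hmeas : ∀ i, Measurable (X i))
    (hindep : ProbabilityTheory.iIndepFun X μ)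
    (hmap : ∀ i, Measure.map (X i) μ = ProbabilityTheory.expMeasure r) :
    (∫ ω, ((Finset.univ.filter
        (fun j : Fin N => X j ω ≠ (⨅ i, X i ω) ∧ X j ω < (⨅ i, X i ω) + l)).card : ℝ) ∂μ)
      = (N - 1) * (1 - Real.exp (-(r * l))) := by
  haveI : Nonempty (Fin N) := ⟨⟨0, by omega⟩⟩
  have hNcast : (1:ℕ) ≤ N := by omega
  have hm_eq : ∀ ω : Ω, (⨅ i, X i ω)
      = Finset.univ.inf' Finset.univ_nonempty (fun i => X i ω) :=
    fun ω => (Finset.inf'_univ_eq_ciInf _).symm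
  set T : Fin N → Finset (Fin N) := fun j => Finset.univ.erase j with hTdef
  have hTcard : ∀ j, (T j).card = N - 1 := fun j => by
    simp [hTdef, Finset.card_erase_of_mem, Finset.card_univ]
  have hTne : ∀ j, (T j).Nonempty := fun j => Finset.card_pos.1 (by rw [hTcard j]; omega)
  set M : Fin N → Ω → ℝ := fun j ω => (T j).inf' (hTne j) (fun i => X i ω) with hMdef
  have hMmeas : ∀ j, Measurable (M j) := fun j =>
    Aux.measurable_inf' (hTne j) (fun n _ => hmeas n)
  have hiff : ∀ j ω, (X j ω ≠ (⨅ i, X i ω) ∧ X j ω < (⨅ i, X i ω) + l)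
      ↔ (M j ω < X j ω ∧ X j ω < M j ω + l) := by
    intro j ω
    have hmin : (⨅ i, X i ω) = X j ω ⊓ M j ω := by
      rw [hm_eq ω]
      have hcongr : Finset.univ.inf' Finset.univ_nonempty (fun i => X i ω)
          = (insert j (T j)).inf' (Finset.insert_nonempty _ _) (fun i => X i ω) :=
        Finset.inf'_congr _ (Finset.insert_erase (Finset.mem_univ j)).symm (fun _ _ => rfl)
      rw [hcongr, Finset.inf'_insert (H := hTne j)]
    rw [hmin]
    exact Aux.min_aux
  set A : Fin N → Set Ω := fun j => {ω | M j ω < X j ω ∧ X j ω < M j ω + l} with hAdef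
  have hAmeas : ∀ j, MeasurableSet (A j) := fun j =>
    (measurableSet_lt (hMmeas j) (hmeas j)).inter
      (measurableSet_lt (hmeas j) ((hMmeas j).add_const l))
  have hindepjM : ∀ j, ProbabilityTheory.IndepFun (X j) (M j) μ := by
    intro j
    have hd : Disjoint ({j} : Finset (Fin N)) (T j) := by
      simp [hTdef]
    have hpair := hindep.indepFun_finset {j} (T j) hd hmeas
    haveI hne : Nonempty {x // x ∈ T j} := by
      obtain ⟨a, ha⟩ := hTne j; exact ⟨⟨a, ha⟩⟩
    let φ : (({j} : Finset (Fin N)) → ℝ) → ℝ := fun v => v ⟨j, Finset.mem_singleton_self j⟩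
    let ψ : (({x // x ∈ T j}) → ℝ) → ℝ :=
      fun v => (Finset.univ : Finset {x // x ∈ T j}).inf' Finset.univ_nonempty v
    have hφ : Measurable φ := measurable_pi_apply _
    have hψ : Measurable ψ :=
      Aux.measurable_inf' (Finset.univ_nonempty) (f := fun i (v : {x // x ∈ T j} → ℝ) => v i)
        (fun n _ => measurable_pi_apply n)
    have hcomp := hpair.comp hφ hψ
    have h1 : φ ∘ (fun a (i : ({j} : Finset (Fin N))) => X i a) = X j := rfl
    have h2 : ψ ∘ (fun a (i : {x // x ∈ T j}) => X i a) = M j := by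
      funext a
      exact Aux.inf'_attach (T j) (hTne j) (fun i => X i a)
    rwa [h1, h2] at hcomp
  have hMlaw : ∀ j, Measure.map (M j) μ = ProbabilityTheory.expMeasure (((N:ℝ) - 1) * r) := by
    intro j
    have h := Aux.map_inf'_eq μ hr X hmeas hindep hmap (T j) (hTne j)
    rw [hTcard j] at h
    have hc : ((N - 1 : ℕ) : ℝ) = (N:ℝ) - 1 := by
      rw [Nat.cast_sub hNcast]; norm_num
    rw [← hc]
    exact h
  set r' : ℝ := ((N:ℝ) - 1) * r with hr'def
  have hN2 : (2:ℝ) ≤ (N:ℝ) := by exact_mod_cast hN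
  have hr' : 0 < r' := by rw [hr'def]; nlinarith
  have hprob : ∀ j, μ (A j)
      = ENNReal.ofReal (1 - Real.exp (-(r*l))) * ENNReal.ofReal (r' / (r + r')) := fun j =>
    Aux.prob_window μ hr hr' hl (X j) (M j) (hmeas j) (hMmeas j) (hindepjM j)
      (hmap j) (hMlaw j)
  have hint : ∀ ω : Ω, ((Finset.univ.filter
      (fun j : Fin N => X j ω ≠ (⨅ i, X i ω) ∧ X j ω < (⨅ i, X i ω) + l)).card : ℝ)
      = ∑ j : Fin N, Set.indicator (A j) (fun _ => (1:ℝ)) ω := by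
    intro ω
    rw [Finset.card_filter, Nat.cast_sum]
    refine Finset.sum_congr rfl fun j _ => ?_
    rw [Set.indicator_apply]
    by_cases h : ω ∈ A j
    · rw [if_pos h, if_pos ((hiff j ω).2 h)]; norm_num
    · rw [if_neg h, if_neg (fun hc => h ((hiff j ω).1 hc))]; norm_num
  rw [show (∫ ω, ((Finset.univ.filter
      (fun j : Fin N => X j ω ≠ (⨅ i, X i ω) ∧ X j ω < (⨅ i, X i ω) + l)).card : ℝ) ∂μ)
      = ∫ ω, ∑ j : Fin N, Set.indicator (A j) (fun _ => (1:ℝ)) ω ∂μ from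
    integral_congr_ae (Filter.Eventually.of_forall hint)]
  rw [integral_finset_sum _ (fun j _ => (integrable_const (1:ℝ)).indicator (hAmeas j))]
  have hone : ∀ j, ∫ ω, Set.indicator (A j) (fun _ => (1:ℝ)) ω ∂μ = (μ (A j)).toReal :=
    fun j => integral_indicator_one (hAmeas j)
  have hnn1 : 0 ≤ 1 - Real.exp (-(r*l)) := by
    have : Real.exp (-(r*l)) ≤ 1 := by rw [Real.exp_le_one_iff]; nlinarith
    linarith
  have htoReal : ∀ j, (μ (A j)).toReal = (1 - Real.exp (-(r*l))) * (r' / (r + r')) := by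
    intro j
    rw [hprob j, ENNReal.toReal_mul, ENNReal.toReal_ofReal hnn1,
      ENNReal.toReal_ofReal (by positivity)]
  simp only [hone, htoReal]
  rw [Finset.sum_const, Finset.card_univ, Fintype.card_fin, nsmul_eq_mul]
  rw [hr'def]
  have hNne : (N:ℝ) ≠ 0 := by positivity
  have hden : r + ((N:ℝ) - 1) * r ≠ 0 := by nlinarith
  rw [show r + ((N:ℝ) - 1) * r = N * r by ring]
  field_simp
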